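/- Let U and V be subspaces of a finite-dimensional complex inner product space such that U ∩ V = {0}, U⊥ ∩ V = {0} and V⊥ ∩ U = {0}. Then dim U = dim V, and hence dim(U + V) = 2·dim U. In particular, if two density matrices have supports U and V satisfying these conditions, the fully reduced USD problem involves two density matrices of the same rank r in a space of dimension 2r. -/
import Mathlib

/-- If `U ∩ V = {0}`, `Uᗮ ∩ V = {0}` and `Vᗮ ∩ U = {0}`, then
`dim U = dim V` and `dim (U + V) = 2 · dim U`: the fully reduced USD problem involves
two density matrices of the same rank `r` in a space of dimension `2r`. -/
theorem reduced_supports_same_rank {E : Type*} [NormedAddCommGroup E]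
    [InnerProductSpace ℂ E] [FiniteDimensional ℂ E] (U V : Submodule ℂ E)
    (hUV : U ⊓ V = ⊥) (hU : Uᗮ ⊓ V = ⊥) (hV : Vᗮ ⊓ U = ⊥) :
    Module.finrank ℂ U = Module.finrank ℂ V ∧
    Module.finrank ℂ ↥(U ⊔ V) = 2 * Module.finrank ℂ U := by
  have h1 := Submodule.finrank_sup_add_finrank_inf_eq Uᗮ V
  have h2 := Submodule.finrank_sup_add_finrank_inf_eq Vᗮ U
  have h3 := Submodule.finrank_sup_add_finrank_inf_eq U V
  rw [hU] at h1
  rw [hV] at h2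
  rw [hUV] at h3
  simp only [finrank_bot, add_zero] at h1 h2 h3
  have hUo := Submodule.finrank_add_finrank_orthogonal (K := U)
  have hVo := Submodule.finrank_add_finrank_orthogonal (K := V)
  have hle1 : Module.finrank ℂ ↥(Uᗮ ⊔ V) ≤ Module.finrank ℂ E :=
    Submodule.finrank_le _
  have hle2 : Module.finrank ℂ ↥(Vᗮ ⊔ U) ≤ Module.finrank ℂ E :=
    Submodule.finrank_le _
  have hVle : Module.finrank ℂ V ≤ Module.finrank ℂ U := by omega
  have hUle : Module.finrank ℂ U ≤ Module.finrank ℂ V := by omega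
  constructor
  · omega
  · omega
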